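/- arXiv:1610.06624 — 2 statements merged into one kernel-verified Lean document; each statement's English description precedes it below -/
import Mathlib

section
/- For every α ∈ S_n, the n+1 permutations [α, 0], [α, 1], ..., [α, n] in S_{n+1} are pairwise distinct, and as α ranges over all of S_n these yield each element of S_{n+1} exactly once; in particular, (n+1)·n! = (n+1)!. -/
/-- Extension of `α ∈ S_m` to `S_{m+1}` fixing the new top element `Fin.last m`. -/
def liftPerm {m : ℕ} (α : Equiv.Perm (Fin m)) : Equiv.Perm (Fin (m + 1)) :=
  finSuccEquivLast.symm.permCongr α.optionCongr

/-- The "Case 0" construction `[α, 0]`: extend the chain of `Q̂_α` by a new arrow at the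
top (here `0` plays the role of the paper's distinguished element `1`, and
`Fin.last m` the role of the new element `n+1`): the resulting permutation sends
`0 ↦ last`, `last ↦ α 0`, and agrees with `α` elsewhere. -/
def chainExt {m : ℕ} (α : Equiv.Perm (Fin m)) : Equiv.Perm (Fin (m + 1)) :=
  liftPerm α * Equiv.swap 0 (Fin.last m)

/-- The cut-and-reconnect construction `[α, j]`: `insPerm α none = [α, 0]` (Case 0),
and for a target `j` of `Q̂_α`, `insPerm α (some j)` cuts the arrow `i → j` of `Q̂_α`
and reconnects via new arrows (virtual vertex) `→ j` and `i →` (new top vertex). -/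
def insPerm {m : ℕ} (α : Equiv.Perm (Fin m)) : Option (Fin m) → Equiv.Perm (Fin (m + 1))
  | none => chainExt α
  | some j => Equiv.swap (Fin.last m) j.castSucc * chainExt α

lemma liftPerm_injective {m : ℕ} : Function.Injective (liftPerm (m := m)) := by
  intro a b h
  exact Equiv.optionCongr_injective (finSuccEquivLast.symm.permCongr.injective h)

lemma chainExt_injective {m : ℕ} : Function.Injective (chainExt (m := m)) := by
  intro a b h
  exact liftPerm_injective (mul_right_cancel h)

lemma chainExt_zero {m : ℕ} (α : Equiv.Perm (Fin m)) :
    chainExt α 0 = Fin.last m := by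
  simp [chainExt, liftPerm, Equiv.swap_apply_left]

lemma insPerm_zero {m : ℕ} (α : Equiv.Perm (Fin m)) (o : Option (Fin m)) :
    insPerm α o 0 = o.elim (Fin.last m) Fin.castSucc := by
  cases o with
  | none => simpa [insPerm] using chainExt_zero α
  | some j =>
    simp [insPerm, chainExt_zero, Equiv.swap_apply_left]

/-- For every `α ∈ S_m` the `m+1` permutations `[α, j] ∈ S_{m+1}` are pairwise
distinct, and as `α` ranges over `S_m` every element of `S_{m+1}` arises exactly once;
in particular `(m+1)·m! = (m+1)!`. -/
theorem insPerm_bijective (m : ℕ) :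
    Function.Bijective
      (fun p : Equiv.Perm (Fin m) × Option (Fin m) => insPerm p.1 p.2) ∧
    (m + 1) * m.factorial = (m + 1).factorial := by
  have hfact : (m + 1) * m.factorial = (m + 1).factorial := (Nat.factorial_succ m).symm
  refine ⟨?_, hfact⟩
  have hinj : Function.Injective
      (fun p : Equiv.Perm (Fin m) × Option (Fin m) => insPerm p.1 p.2) := by
    rintro ⟨α, o⟩ ⟨β, o'⟩ h
    simp only at h
    have h0 := congrArg (fun g : Equiv.Perm (Fin (m + 1)) => g 0) h
    simp only [insPerm_zero] at h0
    have hoo : o = o' := by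
      cases o with
      | none =>
        cases o' with
        | none => rfl
        | some j => exact absurd h0.symm (Fin.ne_last_of_lt (Fin.castSucc_lt_last j))
      | some j =>
        cases o' with
        | none => exact absurd h0 (Fin.ne_last_of_lt (Fin.castSucc_lt_last j))
        | some j' =>
          simp only [Option.elim] at h0
          exact congrArg some (Fin.castSucc_injective m h0)
    subst hoo
    have hab : α = β := by
      cases o with
      | none => exact chainExt_injective h
      | some j =>
        simp only [insPerm] at h
        exact chainExt_injective (mul_left_cancel h)
    rw [hab]
  refine (Fintype.bijective_iff_injective_and_card _).2 ⟨hinj, ?_⟩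
  simp [Fintype.card_perm, Nat.factorial_succ, Nat.mul_comm]
end

section
/- Let α ∈ S_n and β = [α, j] ∈ S_{n+1}. Writing c(σ) for the number of cycles of a permutation σ (including fixed points): if j = 0 then c(β) = c(α); if j ≥ 1 and j lies in the same cycle of α as 1, then c(β) = c(α) + 1; if j ≥ 1 and j does not lie in the cycle of α containing 1, then c(β) = c(α) - 1. -/
/-- Number of cycles of `α`, counting fixed points as 1-cycles. -/
def cycleCount {m : ℕ} (α : Equiv.Perm (Fin m)) : ℕ :=
  Multiset.card α.cycleType + (Finset.univ.filter fun x => α x = x).card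

section Aux
set_option linter.unusedSectionVars false
set_option linter.unusedVariables false
open Equiv Equiv.Perm Finset



variable {γ : Type*} [Fintype γ] [DecidableEq γ]

/-- The SameCycle class of `x` as a finset. -/
def orbF (σ : Perm γ) (x : γ) : Finset γ := univ.filter (σ.SameCycle x)

lemma mem_orbF {σ : Perm γ} {x y : γ} : y ∈ orbF σ x ↔ σ.SameCycle x y := by
  simp [orbF]

lemma self_mem_orbF (σ : Perm γ) (x : γ) : x ∈ orbF σ x := mem_orbF.2 (SameCycle.refl _ _)

lemma orbF_eq_of_sameCycle {σ : Perm γ} {x y : γ} (h : σ.SameCycle x y) :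
    orbF σ x = orbF σ y := by
  ext z; simp only [mem_orbF]
  exact ⟨fun hz => h.symm.trans hz, fun hz => h.trans hz⟩

lemma orbF_fixed {σ : Perm γ} {x : γ} (h : σ x = x) : orbF σ x = {x} := by
  ext z
  simp only [mem_orbF, mem_singleton]
  constructor
  · rintro ⟨k, rfl⟩
    exact ((Function.IsFixedPt.perm_zpow h k)).symm ▸ rfl
  · rintro rfl; exact SameCycle.refl _ _

/-- All SameCycle classes. -/
def orbsF (σ : Perm γ) : Finset (Finset γ) := univ.image (orbF σ)

section Inv

lemma inv_mem_of_invariant {σ : Perm γ} {S : Finset γ} (h : ∀ x ∈ S, σ x ∈ S) :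
    ∀ x ∈ S, σ⁻¹ x ∈ S := by
  have himg : S.image σ = S := by
    apply Finset.eq_of_subset_of_card_le
    · intro y hy; obtain ⟨x, hx, rfl⟩ := Finset.mem_image.1 hy; exact h x hx
    · rw [Finset.card_image_of_injective _ σ.injective]
  intro x hx
  rw [← himg] at hx
  obtain ⟨y, hy, hyx⟩ := Finset.mem_image.1 hx
  rwa [← hyx, show σ⁻¹ (σ y) = y by simp]

lemma zpow_mem_of_invariant {σ : Perm γ} {S : Finset γ} (h : ∀ x ∈ S, σ x ∈ S) :
    ∀ (k : ℤ), ∀ x ∈ S, (σ ^ k) x ∈ S := by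
  intro k
  induction k using Int.induction_on with
  | zero => simp
  | succ n ih =>
      intro x hx
      have heq : (σ ^ ((n : ℤ) + 1)) x = σ ((σ ^ (n : ℤ)) x) := by
        rw [add_comm, zpow_add, zpow_one, Perm.mul_apply]
      rw [heq]
      exact h _ (ih x hx)
  | pred n ih =>
      intro x hx
      have heq : (σ ^ (-(n : ℤ) - 1)) x = σ⁻¹ ((σ ^ (-(n : ℤ))) x) := by
        rw [sub_eq_add_neg, add_comm, zpow_add, zpow_neg_one, Perm.mul_apply]
      rw [heq]
      exact inv_mem_of_invariant h _ (ih x hx)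

end Inv

lemma not_sameCycle_of_invariant {σ : Perm γ} {S : Finset γ} (h : ∀ x ∈ S, σ x ∈ S)
    {x y : γ} (hx : x ∈ S) (hy : y ∉ S) : ¬σ.SameCycle x y := by
  rintro ⟨k, rfl⟩
  exact hy (zpow_mem_of_invariant h k x hx)

/-- Bridge: cycle count equals the number of SameCycle classes. -/
theorem cycleType_card_add_fixed_eq_orbsF_card (σ : Perm γ) :
    Multiset.card σ.cycleType + (univ.filter fun x => σ x = x).card = (orbsF σ).card := by
  classical
  have hfix : (univ.filter fun x => σ x = x) = σ.supportᶜ := by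
    ext x; simp [Equiv.Perm.notMem_support]
  have hsplit : orbsF σ = σ.support.image (orbF σ) ∪ σ.supportᶜ.image (orbF σ) := by
    rw [orbsF, ← Finset.image_union, Finset.union_compl]
  -- classes of support points are supports of cycle factors
  have hA : σ.support.image (orbF σ) = σ.cycleFactorsFinset.image Equiv.Perm.support := by
    ext S
    simp only [Finset.mem_image]
    constructor
    · rintro ⟨x, hx, rfl⟩
      refine ⟨σ.cycleOf x, Equiv.Perm.cycleOf_mem_cycleFactorsFinset_iff.2 hx, ?_⟩
      ext y
      rw [mem_orbF, Equiv.Perm.mem_support_cycleOf_iff]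
      exact ⟨fun hh => hh.1, fun hh => ⟨hh, hx⟩⟩
    · rintro ⟨c, hc, rfl⟩
      have hcyc := (Equiv.Perm.mem_cycleFactorsFinset_iff.1 hc).1
      obtain ⟨a, ha⟩ := hcyc.nonempty_support
      have haσ : a ∈ σ.support := Equiv.Perm.mem_support.2 (by
        rw [← (Equiv.Perm.mem_cycleFactorsFinset_iff.1 hc).2 a ha]
        exact Equiv.Perm.mem_support.1 ha)
      refine ⟨a, haσ, ?_⟩
      have : c = σ.cycleOf a := Equiv.Perm.cycle_is_cycleOf ha hc
      ext y
      rw [mem_orbF, this, Equiv.Perm.mem_support_cycleOf_iff]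
      exact ⟨fun hh => ⟨hh, haσ⟩, fun hh => hh.1⟩
  have hB : σ.supportᶜ.image (orbF σ) = σ.supportᶜ.image (fun x => ({x} : Finset γ)) := by
    apply Finset.image_congr
    intro x hx
    exact orbF_fixed (Equiv.Perm.notMem_support.1 (Finset.mem_compl.1 hx))
  have hcardA : (σ.support.image (orbF σ)).card = σ.cycleFactorsFinset.card := by
    rw [hA]
    apply Finset.card_image_of_injOn
    intro c hc d hd hcd
    by_contra hne
    have hdisj := σ.cycleFactorsFinset_pairwise_disjoint hc hd hne
    have := hdisj.disjoint_support
    rw [hcd] at this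
    obtain ⟨a, ha⟩ := (Equiv.Perm.mem_cycleFactorsFinset_iff.1 hd).1.nonempty_support
    exact (Finset.disjoint_left.1 this) ha ha
  have hcardB : (σ.supportᶜ.image (orbF σ)).card = σ.supportᶜ.card := by
    rw [hB]
    exact Finset.card_image_of_injective _ (fun x y h => Finset.singleton_injective h)
  have hdisj : Disjoint (σ.support.image (orbF σ)) (σ.supportᶜ.image (orbF σ)) := by
    rw [Finset.disjoint_left]
    rintro S hS hS'
    rw [hB] at hS'
    obtain ⟨x, hx, rfl⟩ := Finset.mem_image.1 hS
    obtain ⟨y, hy, hxy⟩ := Finset.mem_image.1 hS'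
    have h1 : x ∈ orbF σ x := self_mem_orbF σ x
    have h2 : σ x ∈ orbF σ x := mem_orbF.2 ⟨1, by simp⟩
    rw [← hxy] at h1 h2
    rw [Finset.mem_singleton] at h1 h2
    exact (Equiv.Perm.mem_support.1 hx) (h2.trans h1.symm)
  rw [hsplit, Finset.card_union_of_disjoint hdisj, hcardA, hcardB, hfix,
    Equiv.Perm.cycleType_def, Multiset.card_map]
  rfl

section Swap

variable {σ : Perm γ} {a b : γ}

/-- Orbits avoiding `a` and `b` are unchanged by multiplying with `swap a b`. -/
lemma orbF_swap_mul_eq (ha : ¬σ.SameCycle x a) (hb : ¬σ.SameCycle x b) :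
    orbF (Equiv.swap a b * σ) x = orbF σ x := by
  have key : ∀ k : ℤ, ((Equiv.swap a b * σ) ^ k) x = (σ ^ k) x := by
    have hstep : ∀ k : ℤ, (σ ^ k) x ≠ a ∧ (σ ^ k) x ≠ b := fun k =>
      ⟨fun h => ha ⟨k, h⟩, fun h => hb ⟨k, h⟩⟩
    intro k
    induction k using Int.induction_on with
    | zero => simp
    | succ n ih =>
        have h1 : ((Equiv.swap a b * σ) ^ ((n : ℤ) + 1)) x
            = (Equiv.swap a b * σ) (((Equiv.swap a b * σ) ^ (n : ℤ)) x) := by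
          rw [add_comm, zpow_add, zpow_one, Perm.mul_apply]
        have h2 : (σ ^ ((n : ℤ) + 1)) x = σ ((σ ^ (n : ℤ)) x) := by
          rw [add_comm, zpow_add, zpow_one, Perm.mul_apply]
        rw [h1, ih, h2, Perm.mul_apply,
          Equiv.swap_apply_of_ne_of_ne (h2 ▸ (hstep _).1) (h2 ▸ (hstep _).2)]
    | pred n ih =>
        have h1 : ((Equiv.swap a b * σ) ^ (-(n : ℤ) - 1)) x
            = (Equiv.swap a b * σ)⁻¹ (((Equiv.swap a b * σ) ^ (-(n : ℤ))) x) := by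
          rw [sub_eq_add_neg, add_comm, zpow_add, zpow_neg_one, Perm.mul_apply]
        have h2 : (σ ^ (-(n : ℤ) - 1)) x = σ⁻¹ ((σ ^ (-(n : ℤ))) x) := by
          rw [sub_eq_add_neg, add_comm, zpow_add, zpow_neg_one, Perm.mul_apply]
        rw [h1, ih, h2, mul_inv_rev, Perm.mul_apply, Equiv.swap_inv,
          Equiv.swap_apply_of_ne_of_ne (hstep _).1 (hstep _).2]
  ext y
  simp only [mem_orbF]
  constructor
  · rintro ⟨k, rfl⟩; exact ⟨k, (key k).symm⟩
  · rintro ⟨k, rfl⟩; exact ⟨k, key k⟩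

lemma sameCycle_swap_mul_of_sameCycle (hab : ¬σ.SameCycle a b) {z : γ}
    (h : σ.SameCycle a z) : (Equiv.swap a b * σ).SameCycle a z := by
  obtain ⟨i, _, hi⟩ := h.exists_pow_eq'
  subst hi
  clear * - hab
  induction i with
  | zero => simpa using SameCycle.refl _ a
  | succ n ih =>
      have hsucc : (σ ^ (n + 1)) a = σ ((σ ^ n) a) := by
        rw [pow_succ', Perm.mul_apply]
      by_cases hA : (σ ^ (n + 1)) a = a
      · rw [hA]
      · have hB : (σ ^ (n + 1)) a ≠ b := fun h => hab ⟨(n + 1 : ℕ), h⟩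
        have hf : (Equiv.swap a b * σ) ((σ ^ n) a) = (σ ^ (n + 1)) a := by
          rw [Perm.mul_apply, ← hsucc, Equiv.swap_apply_of_ne_of_ne hA hB]
        exact ih.trans ⟨1, by rw [zpow_one, hf]⟩

lemma sameCycle_swap_mul_ba (hab' : a ≠ b) (hab : ¬σ.SameCycle a b) :
    (Equiv.swap a b * σ).SameCycle b a := by
  have h1 : σ.SameCycle b (σ⁻¹ b) := ⟨-1, by simp⟩
  have h2 : (Equiv.swap a b * σ).SameCycle b (σ⁻¹ b) := by
    rw [Equiv.swap_comm]
    exact sameCycle_swap_mul_of_sameCycle (fun h => hab h.symm) h1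
  refine h2.trans ⟨1, ?_⟩
  rw [zpow_one, Perm.mul_apply, show σ (σ⁻¹ b) = b by simp, Equiv.swap_apply_right]

lemma orbF_swap_mul_a (hab' : a ≠ b) (hab : ¬σ.SameCycle a b) :
    orbF (Equiv.swap a b * σ) a = orbF σ a ∪ orbF σ b := by
  apply Finset.Subset.antisymm
  · -- invariance of the union
    have hinv : ∀ x ∈ orbF σ a ∪ orbF σ b, (Equiv.swap a b * σ) x ∈ orbF σ a ∪ orbF σ b := by
      intro x hx
      have hσx : σ x ∈ orbF σ a ∪ orbF σ b := by
        rcases Finset.mem_union.1 hx with h | h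
        · exact Finset.mem_union_left _ (mem_orbF.2 ((mem_orbF.1 h).trans ⟨1, by simp⟩))
        · exact Finset.mem_union_right _ (mem_orbF.2 ((mem_orbF.1 h).trans ⟨1, by simp⟩))
      rw [Perm.mul_apply]
      rcases eq_or_ne (σ x) a with h | h
      · rw [h, Equiv.swap_apply_left]
        exact Finset.mem_union_right _ (self_mem_orbF σ b)
      rcases eq_or_ne (σ x) b with h' | h'
      · rw [h', Equiv.swap_apply_right]
        exact Finset.mem_union_left _ (self_mem_orbF σ a)
      · rwa [Equiv.swap_apply_of_ne_of_ne h h']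
    intro z hz
    obtain ⟨k, rfl⟩ := mem_orbF.1 hz
    exact zpow_mem_of_invariant hinv k a (Finset.mem_union_left _ (self_mem_orbF σ a))
  · intro z hz
    rcases Finset.mem_union.1 hz with h | h
    · exact mem_orbF.2 (sameCycle_swap_mul_of_sameCycle hab (mem_orbF.1 h))
    · refine mem_orbF.2 ((sameCycle_swap_mul_ba hab' hab).symm.trans ?_)
      rw [Equiv.swap_comm]
      exact sameCycle_swap_mul_of_sameCycle (fun hh => hab hh.symm) (mem_orbF.1 h)

end Swap

theorem orbsF_card_swap_mul_merge {σ : Perm γ} {a b : γ} (hab' : a ≠ b)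
    (hab : ¬σ.SameCycle a b) :
    (orbsF (Equiv.swap a b * σ)).card + 1 = (orbsF σ).card := by
  classical
  set f := Equiv.swap a b * σ with hf
  set R : Finset (Finset γ) :=
    (univ.filter fun x => ¬σ.SameCycle a x ∧ ¬σ.SameCycle b x).image (orbF σ) with hR
  have hmemR : ∀ S ∈ R, a ∉ S ∧ b ∉ S := by
    intro S hS
    obtain ⟨x, hx, rfl⟩ := Finset.mem_image.1 hS
    rw [Finset.mem_filter] at hx
    constructor
    · intro h; exact hx.2.1 (mem_orbF.1 h).symm
    · intro h; exact hx.2.2 (mem_orbF.1 h).symm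
  have hfab : f.SameCycle a b := (sameCycle_swap_mul_ba hab' hab).symm
  have horbsf : orbsF f = insert (orbF f a) R := by
    ext S
    simp only [orbsF, Finset.mem_image, Finset.mem_insert]
    constructor
    · rintro ⟨x, -, rfl⟩
      by_cases hax : f.SameCycle a x
      · exact Or.inl (orbF_eq_of_sameCycle hax.symm)
      · have h1 : ¬σ.SameCycle a x := fun h => hax (sameCycle_swap_mul_of_sameCycle hab h)
        have h2 : ¬σ.SameCycle b x := by
          intro h
          apply hax
          refine hfab.trans ?_
          have : (Equiv.swap b a * σ).SameCycle b x :=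
            sameCycle_swap_mul_of_sameCycle (fun hh => hab hh.symm) h
          rwa [Equiv.swap_comm] at this
        right
        rw [hR, Finset.mem_image]
        refine ⟨x, Finset.mem_filter.2 ⟨Finset.mem_univ _, h1, h2⟩, ?_⟩
        exact (orbF_swap_mul_eq (fun h => h1 h.symm) (fun h => h2 h.symm)).symm
    · rintro (rfl | hS)
      · exact ⟨a, Finset.mem_univ _, rfl⟩
      · obtain ⟨x, hx, rfl⟩ := Finset.mem_image.1 hS
        rw [Finset.mem_filter] at hx
        exact ⟨x, Finset.mem_univ _,
          orbF_swap_mul_eq (fun h => hx.2.1 h.symm) (fun h => hx.2.2 h.symm)⟩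
  have horbsσ : orbsF σ = insert (orbF σ a) (insert (orbF σ b) R) := by
    ext S
    simp only [orbsF, Finset.mem_image, Finset.mem_insert]
    constructor
    · rintro ⟨x, -, rfl⟩
      by_cases hax : σ.SameCycle a x
      · exact Or.inl (orbF_eq_of_sameCycle hax.symm)
      by_cases hbx : σ.SameCycle b x
      · exact Or.inr (Or.inl (orbF_eq_of_sameCycle hbx.symm))
      · refine Or.inr (Or.inr ?_)
        rw [hR, Finset.mem_image]
        exact ⟨x, Finset.mem_filter.2 ⟨Finset.mem_univ _, hax, hbx⟩, rfl⟩
    · rintro (rfl | rfl | hS)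
      · exact ⟨a, Finset.mem_univ _, rfl⟩
      · exact ⟨b, Finset.mem_univ _, rfl⟩
      · obtain ⟨x, _, rfl⟩ := Finset.mem_image.1 hS
        exact ⟨x, Finset.mem_univ _, rfl⟩
  have hfa_notR : orbF f a ∉ R := by
    intro h
    exact (hmemR _ h).1 (self_mem_orbF f a)
  have hσa_not : orbF σ a ∉ insert (orbF σ b) R := by
    rw [Finset.mem_insert]
    rintro (h | h)
    · have : b ∈ orbF σ a := h ▸ self_mem_orbF σ b
      exact hab (mem_orbF.1 this)
    · exact (hmemR _ h).1 (self_mem_orbF σ a)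
  have hσb_not : orbF σ b ∉ R := fun h => (hmemR _ h).2 (self_mem_orbF σ b)
  rw [horbsf, horbsσ, Finset.card_insert_of_notMem hfa_notR,
    Finset.card_insert_of_notMem hσa_not, Finset.card_insert_of_notMem hσb_not]

lemma pow_mod_cycle {σ : Perm γ} {a : γ} {m : ℕ} (hm : (σ ^ m) a = a) (i : ℕ) :
    (σ ^ i) a = (σ ^ (i % m)) a := by
  conv_lhs => rw [← Nat.mod_add_div i m]
  rw [pow_add, Perm.mul_apply]
  congr 1
  induction (i / m) with
  | zero => simp
  | succ q ih =>
      rw [Nat.mul_succ, pow_add, Perm.mul_apply, hm, ih]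

theorem not_sameCycle_swap_mul_split {σ : Perm γ} {a b : γ} (hab' : a ≠ b)
    (hab : σ.SameCycle a b) : ¬(Equiv.swap a b * σ).SameCycle a b := by
  classical
  obtain ⟨i, hi0, _, hi⟩ := hab.exists_pow_eq''
  have hex : ∃ j, 0 < j ∧ ((σ ^ j) a = a ∨ (σ ^ j) a = b) := ⟨i, hi0, Or.inr hi⟩
  set m := Nat.find hex with hmdef
  obtain ⟨hm0, hmab⟩ := Nat.find_spec hex
  have hmin : ∀ j, 0 < j → j < m → (σ ^ j) a ≠ a ∧ (σ ^ j) a ≠ b := by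
    intro j hj0 hjm
    have := Nat.find_min hex hjm
    push_neg at this
    exact this hj0
  have hmb : (σ ^ m) a = b := by
    rcases hmab with h | h
    · exfalso
      have hr : (σ ^ (i % m)) a = b := by rw [← pow_mod_cycle h i, hi]
      have hrm : i % m < m := Nat.mod_lt _ hm0
      rcases Nat.eq_zero_or_pos (i % m) with h0 | h0
      · rw [h0, pow_zero] at hr; exact hab' hr
      · exact (hmin _ h0 hrm).2 hr
    · exact h
  -- invariant set
  set S : Finset γ := (Finset.range m).image (fun j => (σ ^ j) a) with hS
  have haS : a ∈ S := Finset.mem_image.2 ⟨0, Finset.mem_range.2 hm0, by simp⟩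
  have hbS : b ∉ S := by
    rw [hS]
    rintro hmem
    obtain ⟨j, hj, hjb⟩ := Finset.mem_image.1 hmem
    rw [Finset.mem_range] at hj
    rcases Nat.eq_zero_or_pos j with h0 | h0
    · rw [h0, pow_zero] at hjb; exact hab' hjb
    · exact (hmin _ h0 hj).2 hjb
  have hinv : ∀ x ∈ S, (Equiv.swap a b * σ) x ∈ S := by
    intro x hx
    obtain ⟨j, hj, rfl⟩ := Finset.mem_image.1 hx
    rw [Finset.mem_range] at hj
    have hstep : σ ((σ ^ j) a) = (σ ^ (j + 1)) a := by
      rw [pow_succ', Perm.mul_apply]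
    rw [Perm.mul_apply, hstep]
    rcases eq_or_lt_of_le (Nat.succ_le_of_lt hj) with he | hlt
    · rw [← he] at hmb
      rw [hmb, Equiv.swap_apply_right]
      exact haS
    · have := hmin (j + 1) (Nat.succ_pos _) hlt
      rw [Equiv.swap_apply_of_ne_of_ne this.1 this.2]
      exact Finset.mem_image.2 ⟨j + 1, Finset.mem_range.2 hlt, rfl⟩
  exact not_sameCycle_of_invariant hinv haS hbS

/-- cycleCount equals number of SameCycle classes. -/
theorem cycleCount_eq_orbsF_card {n : ℕ} (σ : Perm (Fin n)) :
    cycleCount σ = (orbsF σ).card :=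
  cycleType_card_add_fixed_eq_orbsF_card σ

theorem cycleCount_swap_mul_merge {n : ℕ} {σ : Perm (Fin n)} {a b : Fin n} (hab' : a ≠ b)
    (hab : ¬σ.SameCycle a b) :
    cycleCount (Equiv.swap a b * σ) + 1 = cycleCount σ := by
  rw [cycleCount_eq_orbsF_card, cycleCount_eq_orbsF_card]
  exact orbsF_card_swap_mul_merge hab' hab

theorem cycleCount_swap_mul_split {n : ℕ} {σ : Perm (Fin n)} {a b : Fin n} (hab' : a ≠ b)
    (hab : σ.SameCycle a b) :
    cycleCount (Equiv.swap a b * σ) = cycleCount σ + 1 := by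
  have hres : Equiv.swap a b * (Equiv.swap a b * σ) = σ := by
    rw [← mul_assoc, Equiv.swap_mul_self, one_mul]
  have := cycleCount_swap_mul_merge hab' (not_sameCycle_swap_mul_split hab' hab)
  rw [hres] at this
  omega

section Lift

variable {n : ℕ} (α : Equiv.Perm (Fin (n + 1)))

lemma liftPerm_castSucc (x : Fin (n + 1)) :
    liftPerm α x.castSucc = (α x).castSucc := by
  simp [liftPerm]

lemma liftPerm_last : liftPerm α (Fin.last (n + 1)) = Fin.last (n + 1) := by
  simp [liftPerm]


lemma liftPerm_zpow_castSucc (k : ℤ) (x : Fin (n + 1)) :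
    ((liftPerm α) ^ k) x.castSucc = ((α ^ k) x).castSucc := by
  induction k using Int.induction_on with
  | zero => simp
  | succ n' ih =>
      have e1 : (liftPerm α) ^ ((n' : ℤ) + 1) = liftPerm α * (liftPerm α) ^ (n' : ℤ) := by
        rw [add_comm (n' : ℤ) 1, zpow_add, zpow_one]
      have e2 : α ^ ((n' : ℤ) + 1) = α * α ^ (n' : ℤ) := by
        rw [add_comm (n' : ℤ) 1, zpow_add, zpow_one]
      rw [e1, e2, Perm.mul_apply, Perm.mul_apply, ih, liftPerm_castSucc]
  | pred n' ih =>
      have e1 : (liftPerm α) ^ (-(n' : ℤ) - 1) = (liftPerm α)⁻¹ * (liftPerm α) ^ (-(n' : ℤ)) := by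
        rw [sub_eq_add_neg, add_comm (-(n' : ℤ)) (-1), zpow_add, zpow_neg_one]
      have e2 : α ^ (-(n' : ℤ) - 1) = α⁻¹ * α ^ (-(n' : ℤ)) := by
        rw [sub_eq_add_neg, add_comm (-(n' : ℤ)) (-1), zpow_add, zpow_neg_one]
      rw [e1, e2, Perm.mul_apply, Perm.mul_apply, ih, inv_eq_iff_eq,
        liftPerm_castSucc, ← Perm.mul_apply α, mul_inv_cancel, Perm.one_apply]

lemma not_sameCycle_liftPerm_castSucc_last (x : Fin (n + 1)) :
    ¬(liftPerm α).SameCycle x.castSucc (Fin.last (n + 1)) := by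
  rintro ⟨k, hk⟩
  rw [liftPerm_zpow_castSucc] at hk
  exact (Fin.castSucc_lt_last _).ne hk

lemma orbF_liftPerm_castSucc (x : Fin (n + 1)) :
    orbF (liftPerm α) x.castSucc = (orbF α x).image Fin.castSucc := by
  ext y
  rcases Fin.eq_castSucc_or_eq_last y with ⟨z, rfl⟩ | rfl
  · simp only [mem_orbF, Finset.mem_image]
    constructor
    · rintro ⟨k, hk⟩
      rw [liftPerm_zpow_castSucc] at hk
      exact ⟨(α ^ k) x, ⟨k, rfl⟩, hk⟩
    · rintro ⟨w, hw, hwz⟩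
      obtain ⟨k, rfl⟩ := hw
      exact ⟨k, by rw [liftPerm_zpow_castSucc, hwz]⟩
  · constructor
    · intro h
      exact absurd (mem_orbF.1 h) (not_sameCycle_liftPerm_castSucc_last α x)
    · intro h
      obtain ⟨w, _, hw⟩ := Finset.mem_image.1 h
      exact absurd hw (Fin.castSucc_lt_last w).ne

lemma orbF_liftPerm_last :
    orbF (liftPerm α) (Fin.last (n + 1)) = {Fin.last (n + 1)} :=
  orbF_fixed (liftPerm_last α)

lemma orbsF_liftPerm :
    orbsF (liftPerm α) = insert {Fin.last (n + 1)}
      ((orbsF α).image (Finset.image Fin.castSucc)) := by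
  ext S
  simp only [orbsF, Finset.mem_image, Finset.mem_insert]
  constructor
  · rintro ⟨y, -, rfl⟩
    rcases Fin.eq_castSucc_or_eq_last y with ⟨z, rfl⟩ | rfl
    · exact Or.inr ⟨orbF α z, ⟨z, Finset.mem_univ _, rfl⟩, (orbF_liftPerm_castSucc α z).symm⟩
    · exact Or.inl (orbF_liftPerm_last α)
  · rintro (rfl | ⟨T, ⟨z, -, rfl⟩, rfl⟩)
    · exact ⟨Fin.last (n + 1), Finset.mem_univ _, orbF_liftPerm_last α⟩
    · exact ⟨z.castSucc, Finset.mem_univ _, orbF_liftPerm_castSucc α z⟩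

lemma cycleCount_liftPerm : cycleCount (liftPerm α) = cycleCount α + 1 := by
  rw [cycleCount_eq_orbsF_card, cycleCount_eq_orbsF_card, orbsF_liftPerm]
  have hnotmem : ({Fin.last (n + 1)} : Finset (Fin (n + 2)))
      ∉ (orbsF α).image (Finset.image Fin.castSucc) := by
    rintro hmem
    obtain ⟨T, hT, hTe⟩ := Finset.mem_image.1 hmem
    obtain ⟨z, -, rfl⟩ := Finset.mem_image.1 hT
    have : z.castSucc ∈ ({Fin.last (n + 1)} : Finset (Fin (n + 2))) := by
      rw [← hTe]
      exact Finset.mem_image_of_mem _ (self_mem_orbF α z)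
    exact (Fin.castSucc_lt_last z).ne (Finset.mem_singleton.1 this)
  rw [Finset.card_insert_of_notMem hnotmem,
    Finset.card_image_of_injective _ (Finset.image_injective (Fin.castSucc_injective _))]

end Lift

section Chain

variable {n : ℕ} (α : Equiv.Perm (Fin (n + 1)))

lemma chainExt_zero_s11 : chainExt α 0 = Fin.last (n + 1) := by
  rw [chainExt, Perm.mul_apply, Equiv.swap_apply_left, liftPerm_last]

lemma chainExt_last : chainExt α (Fin.last (n + 1)) = (α 0).castSucc := by
  rw [chainExt, Perm.mul_apply, Equiv.swap_apply_right, ← Fin.castSucc_zero,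
    liftPerm_castSucc]

lemma chainExt_castSucc {x : Fin (n + 1)} (hx : x ≠ 0) :
    chainExt α x.castSucc = (α x).castSucc := by
  rw [chainExt, Perm.mul_apply, Equiv.swap_apply_of_ne_of_ne, liftPerm_castSucc]
  · rw [← Fin.castSucc_zero]
    exact fun h => hx (Fin.castSucc_injective _ h)
  · exact (Fin.castSucc_lt_last x).ne

lemma cycleCount_chainExt : cycleCount (chainExt α) = cycleCount α := by
  have h : chainExt α
      = Equiv.swap ((α 0).castSucc) (Fin.last (n + 1)) * liftPerm α := by
    rw [chainExt, Equiv.mul_swap_eq_swap_mul, liftPerm_last, ← Fin.castSucc_zero,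
      liftPerm_castSucc]
  have hmerge := cycleCount_swap_mul_merge ((Fin.castSucc_lt_last (α 0)).ne)
    (not_sameCycle_liftPerm_castSucc_last α (α 0))
  rw [← h, cycleCount_liftPerm] at hmerge
  omega

lemma chainExt_sameCycle_zero_last : (chainExt α).SameCycle 0 (Fin.last (n + 1)) :=
  ⟨1, by rw [zpow_one, chainExt_zero_s11]⟩

lemma chainExt_sameCycle_iff (j : Fin (n + 1)) :
    (chainExt α).SameCycle 0 j.castSucc ↔ α.SameCycle 0 j := by
  constructor
  · -- contrapositive via invariant set
    intro h
    by_contra hN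
    set U : Finset (Fin (n + 2)) :=
      insert (Fin.last (n + 1)) ((orbF α 0).image Fin.castSucc) with hU
    have hinv : ∀ x ∈ U, chainExt α x ∈ U := by
      intro x hx
      rcases Finset.mem_insert.1 hx with rfl | hx
      · rw [chainExt_last]
        exact Finset.mem_insert_of_mem
          (Finset.mem_image_of_mem _ (mem_orbF.2 ⟨1, by simp⟩))
      · obtain ⟨z, hz, rfl⟩ := Finset.mem_image.1 hx
        by_cases hz0 : z = 0
        · subst hz0
          rw [Fin.castSucc_zero, chainExt_zero_s11]
          exact Finset.mem_insert_self _ _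
        · rw [chainExt_castSucc α hz0]
          refine Finset.mem_insert_of_mem (Finset.mem_image_of_mem _ ?_)
          exact mem_orbF.2 ((mem_orbF.1 hz).trans ⟨1, by simp⟩)
    have h0U : (0 : Fin (n + 2)) ∈ U := by
      rw [hU, ← Fin.castSucc_zero (n := n + 1)]
      exact Finset.mem_insert_of_mem (Finset.mem_image_of_mem _ (self_mem_orbF α 0))
    have hjU : j.castSucc ∉ U := by
      rw [hU]
      intro hmem
      rcases Finset.mem_insert.1 hmem with he | hmem
      · exact (Fin.castSucc_lt_last j).ne he
      · obtain ⟨z, hz, hze⟩ := Finset.mem_image.1 hmem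
        rw [Fin.castSucc_injective _ hze] at hz
        exact hN (mem_orbF.1 hz)
    exact not_sameCycle_of_invariant hinv h0U hjU h
  · intro h
    obtain ⟨i, hlt, hi⟩ := h.exists_pow_eq'
    subst hi
    clear hlt h
    induction i with
    | zero => simpa using SameCycle.refl _ _
    | succ k ih =>
        have hsucc : (α ^ (k + 1)) 0 = α ((α ^ k) 0) := by
          rw [pow_succ', Perm.mul_apply]
        by_cases hz0 : (α ^ k) 0 = 0
        · rw [hsucc, hz0]
          exact (chainExt_sameCycle_zero_last α).trans
            ⟨1, by rw [zpow_one, chainExt_last]⟩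
        · rw [hsucc]
          exact ih.trans ⟨1, by rw [zpow_one, chainExt_castSucc α hz0]⟩

end Chain

end Aux

/-- Cycle counts under the cut-and-reconnect construction: `c([α,0]) = c(α)`;
`c([α,j]) = c(α) + 1` if `j` lies in the cycle of `α` containing the distinguished
element `0`; `c([α,j]) = c(α) - 1` otherwise. -/
theorem insPerm_cycleCount (m : ℕ) (α : Equiv.Perm (Fin (m + 1))) :
    cycleCount (insPerm α none) = cycleCount α ∧
    ∀ j : Fin (m + 1),
      (α.SameCycle 0 j → cycleCount (insPerm α (some j)) = cycleCount α + 1) ∧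
      (¬ α.SameCycle 0 j → cycleCount (insPerm α (some j)) = cycleCount α - 1) := by
  refine ⟨cycleCount_chainExt α, fun j => ?_⟩
  have hab' : Fin.last (m + 1) ≠ j.castSucc := (Fin.castSucc_lt_last j).ne'
  have hiff : (chainExt α).SameCycle (Fin.last (m + 1)) j.castSucc ↔ α.SameCycle 0 j := by
    have h0l := chainExt_sameCycle_zero_last α
    exact ⟨fun h => (chainExt_sameCycle_iff α j).1 (h0l.trans h),
      fun h => h0l.symm.trans ((chainExt_sameCycle_iff α j).2 h)⟩
  constructor
  · intro h
    have := cycleCount_swap_mul_split hab' (hiff.2 h)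
    rw [cycleCount_chainExt] at this
    exact this
  · intro h
    have := cycleCount_swap_mul_merge hab' (fun hc => h (hiff.1 hc))
    rw [cycleCount_chainExt] at this
    show cycleCount (Equiv.swap (Fin.last (m + 1)) j.castSucc * chainExt α) = cycleCount α - 1
    omega
end
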